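/- arXiv:2410.13120 — 2 statements merged into one kernel-verified Lean document; each statement's English description precedes it below -/
import Mathlib

section
/- Let X and Y be finite-dimensional *-vector spaces of the same dimension, and let ⟨·,·⟩_π and ⟨·,·⟩_σ be non-degenerate Hermiticity preserving bilinear pairings on X × Y. The following are equivalent: (i) there exists λ > 0 such that ⟨x,y⟩_π = λ⟨x,y⟩_σ for all x ∈ X, y ∈ Y; (ii) for every closed convex cone C of X_h, the dual cones of C in Y_h with respect to ⟨·,·⟩_π and ⟨·,·⟩_σ coincide; (iii) for every closed convex cone D of Y_h, the dual cones of D in X_h with respect to ⟨·,·⟩_π and ⟨·,·⟩_σ coincide. -/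
open scoped ComplexOrder

/-- A closed convex cone consisting of Hermitian elements of a ∗-vector space. -/
def IsClosedConvexConeH {X : Type*} [NormedAddCommGroup X] [Module ℂ X] [Star X]
    (C : Set X) : Prop :=
  (∀ x ∈ C, star x = x) ∧ (0 : X) ∈ C ∧ (∀ x ∈ C, ∀ y ∈ C, x + y ∈ C) ∧
    (∀ r : ℝ, 0 ≤ r → ∀ x ∈ C, (r : ℂ) • x ∈ C) ∧ IsClosed C

/-- The dual cone in `Y_h` of a subset of `X_h` with respect to a bilinear pairing. -/
def dualConeR {X Y : Type*} [AddCommGroup X] [Module ℂ X]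
    [AddCommGroup Y] [Module ℂ Y] [Star Y]
    (B : X →ₗ[ℂ] Y →ₗ[ℂ] ℂ) (C : Set X) : Set Y :=
  {y | star y = y ∧ ∀ x ∈ C, 0 ≤ B x y}

/-- The dual cone in `X_h` of a subset of `Y_h` with respect to a bilinear pairing. -/
def dualConeL {X Y : Type*} [AddCommGroup X] [Module ℂ X] [Star X]
    [AddCommGroup Y] [Module ℂ Y]
    (B : X →ₗ[ℂ] Y →ₗ[ℂ] ℂ) (D : Set Y) : Set X :=
  {x | star x = x ∧ ∀ y ∈ D, 0 ≤ B x y}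

lemma herm_decomp {X : Type*} [AddCommGroup X] [Module ℂ X] [StarAddMonoid X] [StarModule ℂ X]
    (x : X) : ∃ h k, star h = h ∧ star k = k ∧ x = h + Complex.I • k := by
  refine ⟨(1/2 : ℂ) • (x + star x), (-(Complex.I)/2 : ℂ) • (x - star x), ?_, ?_, ?_⟩
  · rw [star_smul, star_add, star_star]
    rw [show star ((1:ℂ)/2) = (1/2 : ℂ) by simp]
    module
  · rw [star_smul, star_sub, star_star]
    rw [show star (-(Complex.I)/2) = (Complex.I/2 : ℂ) by simp [Complex.ext_iff]]
    module
  · rw [smul_smul]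
    rw [show Complex.I * (-(Complex.I)/2) = (1/2 : ℂ) by field_simp [Complex.I_mul_I]; simp [Complex.I_sq]]
    module

lemma core_lemma {X Y : Type*}
    [AddCommGroup X] [Module ℂ X] [StarAddMonoid X] [StarModule ℂ X]
    [AddCommGroup Y] [Module ℂ Y] [StarAddMonoid Y] [StarModule ℂ Y]
    (Bπ Bσ : X →ₗ[ℂ] Y →ₗ[ℂ] ℂ)
    (hσnd : (∀ x, (∀ y, Bσ x y = 0) → x = 0) ∧ (∀ y, (∀ x, Bσ x y = 0) → y = 0))
    (hπh : ∀ x y, Bπ (star x) (star y) = starRingEnd ℂ (Bπ x y))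
    (hσh : ∀ x y, Bσ (star x) (star y) = starRingEnd ℂ (Bσ x y))
    (H : ∀ x y, star x = x → star y = y → (0 ≤ Bπ x y ↔ 0 ≤ Bσ x y)) :
    ∃ l : ℝ, 0 < l ∧ ∀ x y, Bπ x y = (l : ℂ) * Bσ x y := by
  -- realness on hermitian pairs
  have hπr : ∀ x y, star x = x → star y = y → Bπ x y = (((Bπ x y).re : ℝ) : ℂ) := by
    intro x y hx hy
    have := hπh x y; rw [hx, hy] at this
    exact (Complex.conj_eq_iff_re.mp this.symm).symm
  have hσr : ∀ x y, star x = x → star y = y → Bσ x y = (((Bσ x y).re : ℝ) : ℂ) := by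
    intro x y hx hy
    have := hσh x y; rw [hx, hy] at this
    exact (Complex.conj_eq_iff_re.mp this.symm).symm
  -- sign agreement for real parts
  have hsign : ∀ x y, star x = x → star y = y → (0 ≤ (Bπ x y).re ↔ 0 ≤ (Bσ x y).re) := by
    intro x y hx hy
    have := H x y hx hy
    rw [hπr x y hx hy, hσr x y hx hy, Complex.zero_le_real, Complex.zero_le_real] at this
    exact this
  -- zero agreement
  have hzero : ∀ x y, star x = x → star y = y → ((Bπ x y).re = 0 ↔ (Bσ x y).re = 0) := by
    intro x y hx hy
    have h1 := hsign x y hx hy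
    have h2 := hsign (-x) y (by rw [star_neg, hx]) hy
    simp only [map_neg, LinearMap.neg_apply, Complex.neg_re] at h2
    constructor
    · intro h
      have a := h1.mp (by linarith)
      have b := h2.mp (by linarith)
      linarith
    · intro h
      have a := h1.mpr (by linarith)
      have b := h2.mpr (by linarith)
      linarith
  -- nondegeneracy of σ restricted to hermitian pairs
  have hndσ1 : ∀ x, star x = x → (∀ y, star y = y → (Bσ x y).re = 0) → x = 0 := by
    intro x hx hzero'
    apply hσnd.1
    intro y
    obtain ⟨h, k, hh, hk, rfl⟩ := herm_decomp y
    have e1 : Bσ x h = 0 := by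
      rw [hσr x h hx hh, hzero' h hh]; simp
    have e2 : Bσ x k = 0 := by
      rw [hσr x k hx hk, hzero' k hk]; simp
    rw [map_add, map_smul, e1, e2]; simp
  -- existence of a proportionality constant for each nonzero hermitian x
  have hm : ∀ x, star x = x → x ≠ 0 →
      ∃ m : ℝ, (∃ y₁, star y₁ = y₁ ∧ (Bσ x y₁).re ≠ 0) ∧
        ∀ y, star y = y → (Bπ x y).re = m * (Bσ x y).re := by
    intro x hx hx0
    have hex : ∃ y₁, star y₁ = y₁ ∧ (Bσ x y₁).re ≠ 0 := by
      by_contra hc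
      push_neg at hc
      exact hx0 (hndσ1 x hx (fun y hy => hc y hy))
    obtain ⟨y₁, hy₁, hy₁0⟩ := hex
    refine ⟨(Bπ x y₁).re / (Bσ x y₁).re, ⟨y₁, hy₁, hy₁0⟩, ?_⟩
    intro y hy
    set t : ℝ := (Bσ x y).re / (Bσ x y₁).re with ht
    have hy' : star (y - (t:ℂ) • y₁) = y - (t:ℂ) • y₁ := by
      rw [star_sub, star_smul, hy₁, hy, Complex.star_def, Complex.conj_ofReal]
    have hre : ∀ (B : X →ₗ[ℂ] Y →ₗ[ℂ] ℂ),
        (B x (y - (t:ℂ) • y₁)).re = (B x y).re - t * (B x y₁).re := by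
      intro B
      simp [Complex.sub_re, Complex.mul_re]
    have hσ0 : (Bσ x (y - (t:ℂ) • y₁)).re = 0 := by
      rw [hre, ht]
      field_simp
      ring
    have hπ0 : (Bπ x (y - (t:ℂ) • y₁)).re = 0 := (hzero x _ hx hy').mpr hσ0
    rw [hre, sub_eq_zero] at hπ0
    have htmul : t * (Bσ x y₁).re = (Bσ x y).re := by rw [ht]; field_simp
    rw [div_mul_eq_mul_div, eq_div_iff hy₁0]
    linear_combination (Bσ x y₁).re * hπ0 + (Bπ x y₁).re * htmul
  -- trivial case: no nonzero hermitian element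
  by_cases hex : ∃ x : X, star x = x ∧ x ≠ 0
  swap
  · push_neg at hex
    refine ⟨1, one_pos, ?_⟩
    intro x y
    obtain ⟨h, k, hh, hk, rfl⟩ := herm_decomp x
    rw [hex h hh, hex k hk]
    simp
  obtain ⟨x₀, hx₀, hx₀0⟩ := hex
  obtain ⟨m₀, ⟨y₀, hy₀, hy₀0⟩, hm₀⟩ := hm x₀ hx₀ hx₀0
  -- positivity of m₀
  have hm₀pos : 0 < m₀ := by
    have e := hm₀ y₀ hy₀
    have hπ0 : (Bπ x₀ y₀).re ≠ 0 := fun hc => hy₀0 ((hzero x₀ y₀ hx₀ hy₀).mp hc)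
    have hs := hsign x₀ y₀ hx₀ hy₀
    rcases lt_or_gt_of_ne hy₀0 with hneg | hpos
    · have hπlt : (Bπ x₀ y₀).re < 0 := by
        by_contra hc
        push_neg at hc
        have := hs.mp hc
        linarith
      nlinarith [e]
    · have h1 : 0 ≤ (Bπ x₀ y₀).re := hs.mpr (le_of_lt hpos)
      have h2 : 0 < (Bπ x₀ y₀).re := lt_of_le_of_ne h1 (Ne.symm hπ0)
      nlinarith [e]
  -- the constant is the same for every hermitian x
  have key : ∀ x y, star x = x → star y = y → (Bπ x y).re = m₀ * (Bσ x y).re := by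
    intro x y hx hy
    by_cases hx0 : x = 0
    · subst hx0; simp
    obtain ⟨m, ⟨y₁, hy₁, hy₁0⟩, hmx⟩ := hm x hx hx0
    suffices hmm₀ : m = m₀ by rw [hmx y hy, hmm₀]
    by_cases hxx : x + x₀ = 0
    · -- x = -x₀
      have hxe : x = -x₀ := by rw [← neg_eq_of_add_eq_zero_left hxx]
      have e : ∀ z, star z = z → (Bπ x z).re = m₀ * (Bσ x z).re := by
        intro z hz
        rw [hxe]
        simp only [map_neg, LinearMap.neg_apply, Complex.neg_re]
        rw [hm₀ z hz]; ring
      have e1 := e y₁ hy₁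
      rw [hmx y₁ hy₁] at e1
      exact mul_right_cancel₀ hy₁0 e1
    · obtain ⟨m₁, _, hm₁⟩ := hm (x + x₀) (by rw [star_add, hx, hx₀]) hxx
      have rel : ∀ z, star z = z →
          (m₁ - m) * (Bσ x z).re = (m₀ - m₁) * (Bσ x₀ z).re := by
        intro z hz
        have h3 := hm₁ z hz
        simp only [map_add, LinearMap.add_apply, Complex.add_re] at h3
        have h1 := hmx z hz
        have h2 := hm₀ z hz
        linear_combination h1 + h2 - h3
      by_cases hmm : m₁ = m
      · by_contra hne
        have hx₀z : ∀ z, star z = z → (Bσ x₀ z).re = 0 := by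
          intro z hz
          have := rel z hz
          rw [hmm] at this
          simp at this
          rcases this with h | h
          · exfalso
            have : m₀ = m₁ := by linarith
            rw [hmm] at this; exact hne this.symm
          · exact h
        exact hx₀0 (hndσ1 x₀ hx₀ hx₀z)
      · set c : ℝ := (m₀ - m₁) / (m₁ - m) with hc
        have hm₁m : m₁ - m ≠ 0 := fun hc' => hmm (by linarith)
        have hprop : ∀ z, star z = z → (Bσ x z).re = c * (Bσ x₀ z).re := by
          intro z hz
          have := rel z hz
          rw [hc, div_mul_eq_mul_div, eq_div_iff hm₁m]
          linarith [this]
        have hsub : star (x - (c:ℂ) • x₀) = x - (c:ℂ) • x₀ := by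
          rw [star_sub, star_smul, hx, hx₀, Complex.star_def, Complex.conj_ofReal]
        have hzero' : ∀ z, star z = z → (Bσ (x - (c:ℂ) • x₀) z).re = 0 := by
          intro z hz
          simp only [map_sub, LinearMap.sub_apply, map_smul, LinearMap.smul_apply,
            smul_eq_mul, Complex.sub_re, Complex.mul_re, Complex.ofReal_re,
            Complex.ofReal_im]
          have := hprop z hz
          nlinarith [this]
        have hxc : x = (c:ℂ) • x₀ := by
          have := hndσ1 _ hsub hzero'
          rwa [sub_eq_zero] at this
        have e : ∀ z, star z = z → (Bπ x z).re = m₀ * (Bσ x z).re := by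
          intro z hz
          rw [hxc]
          simp only [map_smul, LinearMap.smul_apply, smul_eq_mul, Complex.mul_re,
            Complex.ofReal_re, Complex.ofReal_im]
          rw [hm₀ z hz]
          ring
        have e1 := e y₁ hy₁
        rw [hmx y₁ hy₁] at e1
        exact mul_right_cancel₀ hy₁0 e1
  -- conclusion at the complex level
  have hkeyC : ∀ x y, star x = x → star y = y → Bπ x y = (m₀ : ℂ) * Bσ x y := by
    intro x y hx hy
    rw [hπr x y hx hy, hσr x y hx hy, key x y hx hy]
    push_cast
    ring
  refine ⟨m₀, hm₀pos, ?_⟩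
  intro x y
  obtain ⟨h, k, hh, hk, rfl⟩ := herm_decomp x
  obtain ⟨h', k', hh', hk', rfl⟩ := herm_decomp y
  simp only [map_add, map_smul, LinearMap.add_apply, LinearMap.smul_apply, smul_eq_mul]
  rw [hkeyC h h' hh hh', hkeyC h k' hh hk', hkeyC k h' hk hh', hkeyC k k' hk hk']
  ring


lemma nn_mul_helper (r : ℝ) (z : ℂ) (hr : 0 ≤ r) (hz : 0 ≤ z) : 0 ≤ (r:ℂ) * z := by
  simp only [Complex.le_def, Complex.zero_re, Complex.zero_im, Complex.mul_re, Complex.mul_im,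
    Complex.ofReal_re, Complex.ofReal_im] at *
  constructor <;> nlinarith [hz.1, hz.2]

lemma pos_mul_iff (l : ℝ) (z : ℂ) (hl : 0 < l) : 0 ≤ (l:ℂ) * z ↔ 0 ≤ z := by
  simp only [Complex.le_def, Complex.zero_re, Complex.zero_im, Complex.mul_re, Complex.mul_im,
    Complex.ofReal_re, Complex.ofReal_im]
  constructor
  · rintro ⟨h1, h2⟩
    constructor <;> nlinarith
  · rintro ⟨h1, h2⟩
    constructor <;> nlinarith

lemma ray_cone {X : Type*} [NormedAddCommGroup X] [NormedSpace ℂ X] [StarAddMonoid X]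
    [StarModule ℂ X] [FiniteDimensional ℂ X] (x₀ : X) (hx₀ : star x₀ = x₀) :
    IsClosedConvexConeH {z : X | ∃ r : ℝ, 0 ≤ r ∧ z = (r:ℂ) • x₀} := by
  refine ⟨?_, ⟨0, le_refl 0, by simp⟩, ?_, ?_, ?_⟩
  · rintro z ⟨r, hr, rfl⟩
    rw [star_smul, hx₀, Complex.star_def, Complex.conj_ofReal]
  · rintro z ⟨r, hr, rfl⟩ w ⟨s, hs, rfl⟩
    exact ⟨r + s, by linarith, by push_cast; rw [add_smul]⟩
  · rintro r hr z ⟨s, hs, rfl⟩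
    exact ⟨r * s, mul_nonneg hr hs, by rw [smul_smul, ← Complex.ofReal_mul]⟩
  · by_cases h0 : x₀ = 0
    · have he : {z : X | ∃ r : ℝ, 0 ≤ r ∧ z = (r:ℂ) • x₀} = {0} := by
        ext z
        simp only [h0, smul_zero, Set.mem_setOf_eq, Set.mem_singleton_iff]
        constructor
        · rintro ⟨r, _, rfl⟩; rfl
        · rintro rfl; exact ⟨0, le_refl 0, rfl⟩
      rw [he]; exact isClosed_singleton
    · have he : {z : X | ∃ r : ℝ, 0 ≤ r ∧ z = (r:ℂ) • x₀}
          = (LinearMap.toSpanSingleton ℝ X x₀) '' Set.Ici (0:ℝ) := by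
        ext z
        simp only [Set.mem_image, Set.mem_Ici, Set.mem_setOf_eq,
          LinearMap.toSpanSingleton_apply]
        constructor
        · rintro ⟨r, hr, rfl⟩; exact ⟨r, hr, rfl⟩
        · rintro ⟨r, hr, rfl⟩; exact ⟨r, hr, rfl⟩
      rw [he]
      have hinj : LinearMap.ker (LinearMap.toSpanSingleton ℝ X x₀) = ⊥ :=
        LinearMap.ker_toSpanSingleton ℝ h0
      exact ((LinearMap.isClosedEmbedding_of_injective hinj).isClosedMap) _ isClosed_Ici

lemma mem_dualConeR_ray {X Y : Type*} [AddCommGroup X] [Module ℂ X]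
    [AddCommGroup Y] [Module ℂ Y] [Star Y]
    (B : X →ₗ[ℂ] Y →ₗ[ℂ] ℂ) (x₀ : X) (y : Y) :
    y ∈ dualConeR B {z : X | ∃ r : ℝ, 0 ≤ r ∧ z = (r:ℂ) • x₀} ↔
      (star y = y ∧ 0 ≤ B x₀ y) := by
  constructor
  · rintro ⟨h1, h2⟩
    refine ⟨h1, ?_⟩
    have := h2 ((1:ℝ) • x₀) ⟨1, zero_le_one, by norm_num⟩
    simpa using this
  · rintro ⟨h1, h2⟩
    refine ⟨h1, ?_⟩
    rintro z ⟨r, hr, rfl⟩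
    rw [map_smul, LinearMap.smul_apply, smul_eq_mul]
    exact nn_mul_helper r _ hr h2

lemma mem_dualConeL_ray {X Y : Type*} [AddCommGroup X] [Module ℂ X] [Star X]
    [AddCommGroup Y] [Module ℂ Y]
    (B : X →ₗ[ℂ] Y →ₗ[ℂ] ℂ) (y₀ : Y) (x : X) :
    x ∈ dualConeL B {z : Y | ∃ r : ℝ, 0 ≤ r ∧ z = (r:ℂ) • y₀} ↔
      (star x = x ∧ 0 ≤ B x y₀) := by
  constructor
  · rintro ⟨h1, h2⟩
    refine ⟨h1, ?_⟩
    have := h2 ((1:ℝ) • y₀) ⟨1, zero_le_one, by norm_num⟩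
    simpa using this
  · rintro ⟨h1, h2⟩
    refine ⟨h1, ?_⟩
    rintro z ⟨r, hr, rfl⟩
    rw [map_smul, smul_eq_mul]
    exact nn_mul_helper r _ hr h2

/-- For non-degenerate Hermiticity preserving bilinear pairings
`Bπ`, `Bσ` on `X × Y` (finite-dimensional ∗-vector spaces of the same dimension),
the following are equivalent: (i) `Bπ = λ • Bσ` for some `λ > 0`;
(ii) duals of all closed convex cones of `X_h` agree; (iii) duals of all closed
convex cones of `Y_h` agree. -/
theorem stmt_1 {X Y : Type*}
    [NormedAddCommGroup X] [NormedSpace ℂ X] [StarAddMonoid X] [StarModule ℂ X]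
    [FiniteDimensional ℂ X]
    [NormedAddCommGroup Y] [NormedSpace ℂ Y] [StarAddMonoid Y] [StarModule ℂ Y]
    [FiniteDimensional ℂ Y]
    (hdim : Module.finrank ℂ X = Module.finrank ℂ Y)
    (Bπ Bσ : X →ₗ[ℂ] Y →ₗ[ℂ] ℂ)
    (hπnd : (∀ x, (∀ y, Bπ x y = 0) → x = 0) ∧ (∀ y, (∀ x, Bπ x y = 0) → y = 0))
    (hσnd : (∀ x, (∀ y, Bσ x y = 0) → x = 0) ∧ (∀ y, (∀ x, Bσ x y = 0) → y = 0))
    (hπh : ∀ x y, Bπ (star x) (star y) = starRingEnd ℂ (Bπ x y))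
    (hσh : ∀ x y, Bσ (star x) (star y) = starRingEnd ℂ (Bσ x y)) :
    ((∃ l : ℝ, 0 < l ∧ ∀ x y, Bπ x y = (l : ℂ) * Bσ x y) ↔
      ∀ C : Set X, IsClosedConvexConeH C → dualConeR Bπ C = dualConeR Bσ C) ∧
    ((∃ l : ℝ, 0 < l ∧ ∀ x y, Bπ x y = (l : ℂ) * Bσ x y) ↔
      ∀ D : Set Y, IsClosedConvexConeH D → dualConeL Bπ D = dualConeL Bσ D) := by
  have easyR : (∃ l : ℝ, 0 < l ∧ ∀ x y, Bπ x y = (l : ℂ) * Bσ x y) →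
      ∀ C : Set X, IsClosedConvexConeH C → dualConeR Bπ C = dualConeR Bσ C := by
    rintro ⟨l, hl, hE⟩ C _
    ext y
    simp only [dualConeR, Set.mem_setOf_eq]
    refine and_congr_right fun _ => forall₂_congr fun x _ => ?_
    rw [hE x y]
    exact pos_mul_iff l _ hl
  have easyL : (∃ l : ℝ, 0 < l ∧ ∀ x y, Bπ x y = (l : ℂ) * Bσ x y) →
      ∀ D : Set Y, IsClosedConvexConeH D → dualConeL Bπ D = dualConeL Bσ D := by
    rintro ⟨l, hl, hE⟩ D _
    ext x
    simp only [dualConeL, Set.mem_setOf_eq]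
    refine and_congr_right fun _ => forall₂_congr fun y _ => ?_
    rw [hE x y]
    exact pos_mul_iff l _ hl
  have HofR : (∀ C : Set X, IsClosedConvexConeH C → dualConeR Bπ C = dualConeR Bσ C) →
      ∀ x y, star x = x → star y = y → (0 ≤ Bπ x y ↔ 0 ≤ Bσ x y) := by
    intro hd x y hx hy
    have heq := hd _ (ray_cone x hx)
    constructor
    · intro h
      have hmem : y ∈ dualConeR Bπ {z : X | ∃ r : ℝ, 0 ≤ r ∧ z = (r:ℂ) • x} :=
        (mem_dualConeR_ray Bπ x y).mpr ⟨hy, h⟩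
      rw [heq] at hmem
      exact ((mem_dualConeR_ray Bσ x y).mp hmem).2
    · intro h
      have hmem : y ∈ dualConeR Bσ {z : X | ∃ r : ℝ, 0 ≤ r ∧ z = (r:ℂ) • x} :=
        (mem_dualConeR_ray Bσ x y).mpr ⟨hy, h⟩
      rw [← heq] at hmem
      exact ((mem_dualConeR_ray Bπ x y).mp hmem).2
  have HofL : (∀ D : Set Y, IsClosedConvexConeH D → dualConeL Bπ D = dualConeL Bσ D) →
      ∀ x y, star x = x → star y = y → (0 ≤ Bπ x y ↔ 0 ≤ Bσ x y) := by
    intro hd x y hx hy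
    have heq := hd _ (ray_cone y hy)
    constructor
    · intro h
      have hmem : x ∈ dualConeL Bπ {z : Y | ∃ r : ℝ, 0 ≤ r ∧ z = (r:ℂ) • y} :=
        (mem_dualConeL_ray Bπ y x).mpr ⟨hx, h⟩
      rw [heq] at hmem
      exact ((mem_dualConeL_ray Bσ y x).mp hmem).2
    · intro h
      have hmem : x ∈ dualConeL Bσ {z : Y | ∃ r : ℝ, 0 ≤ r ∧ z = (r:ℂ) • y} :=
        (mem_dualConeL_ray Bσ y x).mpr ⟨hx, h⟩
      rw [← heq] at hmem
      exact ((mem_dualConeL_ray Bπ y x).mp hmem).2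
  exact ⟨⟨easyR, fun hd => core_lemma Bπ Bσ hσnd hπh hσh (HofR hd)⟩,
    ⟨easyL, fun hd => core_lemma Bπ Bσ hσnd hπh hσh (HofL hd)⟩⟩
end

section
/- Let V and W be nonzero finite-dimensional complex vector spaces, ⟨·,·⟩_V a non-degenerate bilinear form on V, and {e_i}, {f_i} bases of V with ⟨e_i,f_j⟩_V = δ_{ij}; define Γ : L(V,W) → V ⊗ W by Γ(φ) = Σ_i e_i ⊗ φ(f_i). For a linear isomorphism Θ on V ⊗ W, the following are equivalent: (i) there exist bases {e'_i} and {f'_i} of V such that Θ(Γ(φ)) = Σ_i e'_i ⊗ φ(f'_i) for every linear map φ : V → W; (ii) Θ = σ ⊗ id_W for some linear isomorphism σ on V (i.e., Θ(v⊗w) = σ(v)⊗w for all v ∈ V, w ∈ W). -/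
open scoped TensorProduct

/-- Let `V`, `W` be nonzero finite-dimensional complex vector spaces,
`B` a non-degenerate bilinear form on `V`, and `e`, `f` bases of `V` with
`B (e i) (f j) = δ_{ij}`; let `Γ(φ) = Σ_i e i ⊗ φ (f i)`. For a linear isomorphism
`Θ` of `V ⊗ W`, the following are equivalent: (i) there exist bases `e'`, `f'` of `V`
with `Θ (Γ φ) = Σ_i e' i ⊗ φ (f' i)` for every `φ`; (ii) `Θ = σ ⊗ id_W` for some
linear isomorphism `σ` of `V`. -/
theorem stmt_10 {V W : Type*}
    [AddCommGroup V] [Module ℂ V] [FiniteDimensional ℂ V] [Nontrivial V]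
    [AddCommGroup W] [Module ℂ W] [FiniteDimensional ℂ W] [Nontrivial W]
    {ι : Type*} [Fintype ι] [DecidableEq ι]
    (B : V →ₗ[ℂ] V →ₗ[ℂ] ℂ)
    (hnd : (∀ v, (∀ v', B v v' = 0) → v = 0) ∧ (∀ v', (∀ v, B v v' = 0) → v' = 0))
    (e f : Module.Basis ι ℂ V)
    (hef : ∀ i j, B (e i) (f j) = if i = j then 1 else 0)
    (Θ : V ⊗[ℂ] W ≃ₗ[ℂ] V ⊗[ℂ] W) :
    (∃ e' f' : Module.Basis ι ℂ V, ∀ φ : V →ₗ[ℂ] W,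
        Θ (∑ i, e i ⊗ₜ[ℂ] φ (f i)) = ∑ i, e' i ⊗ₜ[ℂ] φ (f' i)) ↔
      (∃ σ : V ≃ₗ[ℂ] V, ∀ (v : V) (w : W), Θ (v ⊗ₜ[ℂ] w) = σ v ⊗ₜ[ℂ] w) := by
  constructor
  · rintro ⟨e', f', h⟩
    set σ₀ : V →ₗ[ℂ] V :=
      { toFun := fun v => ∑ i, B v (f' i) • e' i
        map_add' := by intro a b; simp [add_smul, Finset.sum_add_distrib]
        map_smul' := by intro c a; simp [smul_smul, Finset.smul_sum] } with hσ₀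
    have key : ∀ (v : V) (w : W), Θ (v ⊗ₜ[ℂ] w) = σ₀ v ⊗ₜ[ℂ] w := by
      intro v w
      have hv : (∑ i, B v (f i) • e i) = v := by
        set u : V := (∑ i, B v (f i) • e i) - v with hu
        have h0 : ∀ j, B u (f j) = 0 := by
          intro j
          rw [hu]
          simp only [map_sub, map_smul, LinearMap.sub_apply, LinearMap.smul_apply]
          rw [map_sum, LinearMap.sum_apply]
          simp [hef, smul_eq_mul]
        have h1 : ∀ x, B u x = 0 := by
          intro x
          rw [← f.sum_repr x, map_sum]
          simp [h0]
        have h2 := hnd.1 _ h1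
        rw [hu, sub_eq_zero] at h2
        exact h2
      have hφ := h ((B v).smulRight w)
      simp only [LinearMap.smulRight_apply] at hφ
      have hvw : (∑ i, e i ⊗ₜ[ℂ] (B v (f i) • w)) = v ⊗ₜ[ℂ] w := by
        calc (∑ i, e i ⊗ₜ[ℂ] (B v (f i) • w))
            = ∑ i, (B v (f i) • e i) ⊗ₜ[ℂ] w := by
              exact Finset.sum_congr rfl fun i _ => by
                rw [← TensorProduct.smul_tmul]
          _ = (∑ i, B v (f i) • e i) ⊗ₜ[ℂ] w := (TensorProduct.sum_tmul _ _ _).symm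
          _ = v ⊗ₜ[ℂ] w := by rw [hv]
      have hsw : (∑ i, e' i ⊗ₜ[ℂ] (B v (f' i) • w)) = σ₀ v ⊗ₜ[ℂ] w := by
        calc (∑ i, e' i ⊗ₜ[ℂ] (B v (f' i) • w))
            = ∑ i, (B v (f' i) • e' i) ⊗ₜ[ℂ] w := by
              exact Finset.sum_congr rfl fun i _ => by
                rw [← TensorProduct.smul_tmul]
          _ = (∑ i, B v (f' i) • e' i) ⊗ₜ[ℂ] w := (TensorProduct.sum_tmul _ _ _).symm
          _ = σ₀ v ⊗ₜ[ℂ] w := rfl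
      rw [← hvw, hφ, hsw]
    obtain ⟨w₀, hw₀⟩ := exists_ne (0 : W)
    obtain ⟨g, hg⟩ : ∃ g : Module.Dual ℂ W, g w₀ ≠ 0 := by
      by_contra hcon
      push_neg at hcon
      exact hw₀ ((Module.forall_dual_apply_eq_zero_iff ℂ w₀).mp hcon)
    have hinj : Function.Injective σ₀ := by
      intro a b hab
      have hz : σ₀ (a - b) = 0 := by rw [map_sub, hab, sub_self]
      have hΘ : Θ ((a - b) ⊗ₜ[ℂ] w₀) = 0 := by
        rw [key, hz, TensorProduct.zero_tmul]
      have htz : (a - b) ⊗ₜ[ℂ] w₀ = 0 := Θ.injective (by simp [hΘ])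
      have h5 := congrArg (fun z => (TensorProduct.rid ℂ V) ((LinearMap.lTensor V g) z)) htz
      simp only [LinearMap.lTensor_tmul, map_zero, TensorProduct.rid_tmul] at h5
      rcases smul_eq_zero.mp h5 with h6 | h6
      · exact absurd h6 hg
      · exact sub_eq_zero.mp h6
    exact ⟨LinearEquiv.ofInjectiveEndo σ₀ hinj, fun v w => by rw [key]; rfl⟩
  · rintro ⟨σ, hσ⟩
    refine ⟨e.map σ, f, fun φ => ?_⟩
    rw [map_sum]
    simp [hσ, Module.Basis.map_apply]
end
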